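/- Let A, B ∈ ℂⁿˣⁿ with A invertible, and suppose SRG(A⁻¹ + B) ⊆ SRG(A⁻¹) + SRG(B) (Minkowski sum). If SRG(A)⁻¹ ∩ (−SRG(B)) = ∅, where SRG(A)⁻¹ := { (z⁻¹)* : z ∈ SRG(A) }, then det(I + AB) ≠ 0. -/

import Mathlib

open Complex Pointwise

noncomputable def ang {n : ℕ} (y u : EuclideanSpace ℂ (Fin n)) : ℝ :=
  Real.arccos ((inner ℂ y u : ℂ).re / (‖y‖ * ‖u‖))

noncomputable def SRG {n : ℕ}
    (A : EuclideanSpace ℂ (Fin n) →ₗ[ℂ] EuclideanSpace ℂ (Fin n)) : Set ℂ :=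
  { z | ∃ u : EuclideanSpace ℂ (Fin n), u ≠ 0 ∧
      (z = ((‖A u‖ / ‖u‖ : ℝ) : ℂ) * Complex.exp ((ang (A u) u : ℝ) * Complex.I) ∨
       z = ((‖A u‖ / ‖u‖ : ℝ) : ℂ) * Complex.exp (-((ang (A u) u : ℝ)) * Complex.I)) }

noncomputable def SRGm {n : ℕ} (A : Matrix (Fin n) (Fin n) ℂ) : Set ℂ :=
  SRG (Matrix.toEuclideanLin A)

lemma ang_comm {n : ℕ} (y u : EuclideanSpace ℂ (Fin n)) : ang y u = ang u y := by
  unfold ang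
  rw [← inner_conj_symm y u]
  rw [Complex.conj_re, mul_comm ‖y‖]

lemma conj_inv_polar (r θ : ℝ) :
    (starRingEnd ℂ) (((r : ℂ) * Complex.exp ((θ : ℂ) * Complex.I))⁻¹)
      = ((r⁻¹ : ℝ) : ℂ) * Complex.exp ((θ : ℂ) * Complex.I) := by
  rw [mul_inv, ← Complex.exp_neg, map_mul, ← Complex.exp_conj, map_inv₀]
  simp [Complex.conj_ofReal, Complex.conj_I, mul_neg, neg_neg]

lemma zero_mem_srgm {n : ℕ} {M : Matrix (Fin n) (Fin n) ℂ} (h : M.det = 0) :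
    (0 : ℂ) ∈ SRGm M := by
  obtain ⟨v, hv, hMv⟩ := (Matrix.exists_mulVec_eq_zero_iff).mpr h
  refine ⟨(WithLp.equiv 2 _).symm v, ?_, Or.inl ?_⟩
  · simpa using hv
  · have h0 : Matrix.toEuclideanLin M ((WithLp.equiv 2 _).symm v) = 0 := by
      rw [show Matrix.toEuclideanLin M ((WithLp.equiv 2 _).symm v) = WithLp.toLp 2 (Matrix.mulVec M v) from rfl, hMv]
      simp
    rw [h0]
    simp

lemma mem_conj_inv {n : ℕ} (A : Matrix (Fin n) (Fin n) ℂ) (hA : IsUnit A)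
    {x : ℂ} (hx : x ∈ SRGm A⁻¹) :
    ∃ z ∈ SRGm A, x = (starRingEnd ℂ) z⁻¹ := by
  obtain ⟨u, hu, hx⟩ := hx
  set v := Matrix.toEuclideanLin A⁻¹ u with hv
  have hdA : IsUnit A.det := (Matrix.isUnit_iff_isUnit_det A).mp hA
  have hAv : Matrix.toEuclideanLin A v = u := by
    rw [hv, Matrix.toEuclideanLin_apply, Matrix.toEuclideanLin_apply]
    simp [Matrix.mulVec_mulVec, Matrix.mul_nonsing_inv A hdA]
  have hv0 : v ≠ 0 := by
    intro h
    exact hu (by rw [← hAv, h, map_zero])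
  have hangle : ang u v = ang v u := ang_comm u v
  rcases hx with h | h
  · refine ⟨((‖u‖ / ‖v‖ : ℝ) : ℂ) * Complex.exp ((ang u v : ℝ) * Complex.I),
      ⟨v, hv0, Or.inl (by rw [hAv])⟩, ?_⟩
    rw [h, conj_inv_polar, hangle, inv_div]
  · refine ⟨((‖u‖ / ‖v‖ : ℝ) : ℂ) * Complex.exp (-((ang u v : ℝ)) * Complex.I),
      ⟨v, hv0, Or.inr (by rw [hAv])⟩, ?_⟩
    have hcast : -((ang u v : ℝ) : ℂ) * Complex.I = (((-(ang u v) : ℝ)) : ℂ) * Complex.I := by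
      push_cast; ring
    rw [h, hcast, conj_inv_polar, hangle, inv_div]
    push_cast
    ring_nf

theorem srg_separation_det {n : ℕ} (A B : Matrix (Fin n) (Fin n) ℂ)
    (hA : IsUnit A)
    (hsub : SRGm (A⁻¹ + B) ⊆ SRGm A⁻¹ + SRGm B)
    (hsep : { w : ℂ | ∃ z ∈ SRGm A, w = (starRingEnd ℂ) z⁻¹ } ∩ (-(SRGm B)) = ∅) :
    (1 + A * B).det ≠ 0 := by
  intro hdet
  have hdA : IsUnit A.det := (Matrix.isUnit_iff_isUnit_det A).mp hA
  have key : (A⁻¹ + B).det = 0 := by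
    have hAB : A⁻¹ + B = A⁻¹ * (1 + A * B) := by
      rw [mul_add, mul_one, ← mul_assoc, Matrix.nonsing_inv_mul A hdA, one_mul]
    rw [hAB, Matrix.det_mul, hdet, mul_zero]
  obtain ⟨x, hx, y, hy, hxy⟩ := Set.mem_add.mp (hsub (zero_mem_srgm key))
  have hxneg : x = -y := eq_neg_of_add_eq_zero_left hxy
  obtain ⟨z, hz, hzx⟩ := mem_conj_inv A hA hx
  have hmem : x ∈ ({ w : ℂ | ∃ z ∈ SRGm A, w = (starRingEnd ℂ) z⁻¹ } ∩ (-(SRGm B))) :=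
    ⟨⟨z, hz, hzx⟩, by simpa [Set.mem_neg, hxneg] using hy⟩
  rw [hsep] at hmem
  exact hmem
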